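/- Let A_S ∈ R^{d_S × R} and A_{S^c} ∈ R^{d_{S^c} × R} be matrices with unit-norm columns, W = diag(w_1,...,w_R) with w_1 ≥ ... ≥ w_R > 0, and let M = A_S W A_{S^c}^T. Define δ = max(‖A_S^T A_S − I_R‖_2, ‖A_{S^c}^T A_{S^c} − I_R‖_2). Then for each r, the r-th largest singular value λ_r of M satisfies |λ_r − w_r| ≤ √2 · δ · w_1. -/

import Mathlib

open Matrix
open scoped RealInnerProductSpace

noncomputable def specNorm {m n : Type*} [Fintype m] [Fintype n] [DecidableEq n]
    (A : Matrix m n ℝ) : ℝ :=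
  ‖LinearMap.toContinuousLinearMap (Matrix.toEuclideanLin A)‖

lemma specNorm_nonneg {m n : Type*} [Fintype m] [Fintype n] [DecidableEq n]
    (A : Matrix m n ℝ) : 0 ≤ specNorm A := norm_nonneg _

lemma le_specNorm {m n : Type*} [Fintype m] [Fintype n] [DecidableEq n]
    (A : Matrix m n ℝ) (x : EuclideanSpace ℝ n) :
    ‖Matrix.toEuclideanLin A x‖ ≤ specNorm A * ‖x‖ := by
  simpa [specNorm] using (LinearMap.toContinuousLinearMap (Matrix.toEuclideanLin A)).le_opNorm x

lemma toEuclideanLin_mul_apply {m n k : Type*} [Fintype m] [Fintype n] [Fintype k]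
    [DecidableEq n] [DecidableEq k]
    (X : Matrix m n ℝ) (Y : Matrix n k ℝ) (x : EuclideanSpace ℝ k) :
    Matrix.toEuclideanLin (X * Y) x = Matrix.toEuclideanLin X (Matrix.toEuclideanLin Y x) := by
  simp [Matrix.toEuclideanLin_apply, Matrix.mulVec_mulVec]

lemma transpose_eq_conjTranspose {m n : Type*} (M : Matrix m n ℝ) : Mᵀ = Mᴴ := by
  ext i j; simp [Matrix.conjTranspose_apply]

lemma inner_tmul_self {m n : Type*} [Fintype m] [Fintype n] [DecidableEq m] [DecidableEq n]
    (M : Matrix m n ℝ) (x : EuclideanSpace ℝ n) :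
    ⟪x, Matrix.toEuclideanLin (Mᵀ * M) x⟫ = ‖Matrix.toEuclideanLin M x‖ ^ 2 := by
  rw [toEuclideanLin_mul_apply, transpose_eq_conjTranspose,
    Matrix.toEuclideanLin_conjTranspose_eq_adjoint, LinearMap.adjoint_inner_right,
    real_inner_self_eq_norm_sq]

lemma toEuclideanLin_one_apply {n : Type*} [Fintype n] [DecidableEq n]
    (x : EuclideanSpace ℝ n) : Matrix.toEuclideanLin (1 : Matrix n n ℝ) x = x := by
  simp [Matrix.toEuclideanLin_apply]

lemma abs_inner_toEuclideanLin_le {n : Type*} [Fintype n] [DecidableEq n]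
    (E : Matrix n n ℝ) (y : EuclideanSpace ℝ n) :
    |⟪y, Matrix.toEuclideanLin E y⟫| ≤ specNorm E * ‖y‖ ^ 2 := by
  calc |⟪y, Matrix.toEuclideanLin E y⟫| ≤ ‖y‖ * ‖Matrix.toEuclideanLin E y‖ :=
        abs_real_inner_le_norm _ _
    _ ≤ ‖y‖ * (specNorm E * ‖y‖) := by
        have := le_specNorm E y
        nlinarith [norm_nonneg y]
    _ = specNorm E * ‖y‖ ^ 2 := by ring

lemma norm_sq_apply_sub_norm_sq {m n : Type*} [Fintype m] [Fintype n]
    [DecidableEq m] [DecidableEq n]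
    (C : Matrix m n ℝ) (y : EuclideanSpace ℝ n) :
    |‖Matrix.toEuclideanLin C y‖ ^ 2 - ‖y‖ ^ 2| ≤ specNorm (Cᵀ * C - 1) * ‖y‖ ^ 2 := by
  have h1 : ‖Matrix.toEuclideanLin C y‖ ^ 2 - ‖y‖ ^ 2
      = ⟪y, Matrix.toEuclideanLin (Cᵀ * C - 1) y⟫ := by
    rw [map_sub, LinearMap.sub_apply, inner_sub_right, inner_tmul_self,
      toEuclideanLin_one_apply, real_inner_self_eq_norm_sq]
  rw [h1]
  exact abs_inner_toEuclideanLin_le _ y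

lemma norm_sq_eq_sum {n : Type*} [Fintype n] (x : EuclideanSpace ℝ n) :
    ‖x‖ ^ 2 = ∑ i, x i ^ 2 := by
  rw [← real_inner_self_eq_norm_sq, PiLp.inner_apply]
  simp [sq]

lemma toEuclideanLin_eigen {n : Type*} [Fintype n] [DecidableEq n]
    {H : Matrix n n ℝ} (hH : H.IsHermitian) (j : n) :
    Matrix.toEuclideanLin H (hH.eigenvectorBasis j)
      = hH.eigenvalues j • hH.eigenvectorBasis j := by
  have h := hH.mulVec_eigenvectorBasis j
  ext i
  have := congrFun h i
  simpa [Matrix.toEuclideanLin_apply] using this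

lemma span_repr {n ι : Type*} [Fintype n] [Fintype ι] [DecidableEq n] [DecidableEq ι]
    (H : Matrix n n ℝ) (v : ι → EuclideanSpace ℝ n) (hv : Orthonormal ℝ v)
    (lam : ι → ℝ) (heig : ∀ i, Matrix.toEuclideanLin H (v i) = lam i • v i)
    (x : EuclideanSpace ℝ n) (hx : x ∈ Submodule.span ℝ (Set.range v)) :
    ∃ a : ι → ℝ, ⟪x, Matrix.toEuclideanLin H x⟫ = ∑ i, lam i * a i ^ 2
      ∧ ‖x‖ ^ 2 = ∑ i, a i ^ 2 := by
  obtain ⟨a, rfl⟩ := (Submodule.mem_span_range_iff_exists_fun ℝ).mp hx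
  refine ⟨a, ?_, ?_⟩
  · have hT : Matrix.toEuclideanLin H (∑ i, a i • v i) = ∑ j, (lam j * a j) • v j := by
      rw [map_sum]
      refine Finset.sum_congr rfl fun j _ => ?_
      rw [_root_.map_smul, heig j, smul_smul, mul_comm]
    rw [hT, sum_inner, Finset.sum_congr rfl fun i _ => inner_sum _ _ _]
    have hite := orthonormal_iff_ite.mp hv
    simp only [real_inner_smul_left, real_inner_smul_right, hite]
    rw [Finset.sum_comm]
    refine Finset.sum_congr rfl fun j _ => ?_
    rw [Finset.sum_eq_single j]
    · simp [sq]; ring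
    · intro i _ hij; simp [hij]; try exact fun h => absurd h hij
    · intro h; simp at h
  · rw [← real_inner_self_eq_norm_sq, sum_inner, Finset.sum_congr rfl fun i _ => inner_sum _ _ _]
    have hite := orthonormal_iff_ite.mp hv
    simp only [real_inner_smul_left, real_inner_smul_right, hite]
    refine Finset.sum_congr rfl fun i _ => ?_
    rw [Finset.sum_eq_single i]
    · simp [sq]
    · intro j _ hij; simp [hij]; intro h; exact absurd h.symm hij
    · intro h; simp at h

lemma card_subtype_ge (n a : ℕ) (ha : a ≤ n) :
    Fintype.card {i : Fin n // a ≤ i.1} = n - a := by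
  rw [Fintype.card_of_bijective (f := fun i => (⟨i.1.1 - a, by omega⟩ : Fin (n - a))) ?_,
    Fintype.card_fin]
  constructor
  · rintro ⟨⟨i, hi⟩, hi2⟩ ⟨⟨j, hj⟩, hj2⟩ hij
    have := congrArg Fin.val hij
    simp at this hi2 hj2 ⊢
    omega
  · rintro ⟨j, hj⟩
    exact ⟨⟨⟨j + a, by omega⟩, by simp⟩, by simp⟩

lemma card_subtype_le (n b : ℕ) (hb : b < n) :
    Fintype.card {i : Fin n // i.1 ≤ b} = b + 1 := by
  rw [Fintype.card_of_bijective (f := fun i => (⟨i.1.1, by omega⟩ : Fin (b + 1))) ?_,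
    Fintype.card_fin]
  constructor
  · rintro ⟨⟨i, hi⟩, hi2⟩ ⟨⟨j, hj⟩, hj2⟩ hij
    have := congrArg Fin.val hij
    simp at this ⊢
    omega
  · rintro ⟨j, hj⟩
    exact ⟨⟨⟨j, by omega⟩, by simp; omega⟩, by simp⟩

lemma exists_ne_zero_mem_inf {n : ℕ} (V U : Submodule ℝ (EuclideanSpace ℝ (Fin n)))
    (h : n < Module.finrank ℝ V + Module.finrank ℝ U) :
    ∃ x, x ∈ V ∧ x ∈ U ∧ x ≠ 0 := by
  have hs := Submodule.finrank_sup_add_finrank_inf_eq V U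
  have h1 : Module.finrank ℝ ↥(V ⊔ U) ≤ n := by
    have := Submodule.finrank_le (V ⊔ U)
    simpa using this
  have h2 : 0 < Module.finrank ℝ ↥(V ⊓ U) := by omega
  have : Nontrivial ↥(V ⊓ U) := Module.finrank_pos_iff.mp h2
  obtain ⟨y, hy⟩ := exists_ne (0 : ↥(V ⊓ U))
  exact ⟨y.1, (Submodule.mem_inf.mp y.2).1, (Submodule.mem_inf.mp y.2).2,
    fun h => hy (Subtype.ext h)⟩

lemma cf_lower {n : ℕ} {H : Matrix (Fin n) (Fin n) ℝ} (hH : H.IsHermitian)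
    (μ : Fin n → ℝ) (hμanti : Antitone μ) (e : Equiv.Perm (Fin n))
    (he : ∀ i, μ i = hH.eigenvalues (e i)) (r : Fin n) (c : ℝ)
    (V : Submodule ℝ (EuclideanSpace ℝ (Fin n)))
    (hdim : r.1 + 1 ≤ Module.finrank ℝ V)
    (hq : ∀ x ∈ V, c * ‖x‖ ^ 2 ≤ ⟪x, Matrix.toEuclideanLin H x⟫) :
    c ≤ μ r := by
  classical
  set v : {i : Fin n // r.1 ≤ i.1} → EuclideanSpace ℝ (Fin n) :=
    fun i => hH.eigenvectorBasis (e i.1) with hv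
  have hvon : Orthonormal ℝ v :=
    hH.eigenvectorBasis.orthonormal.comp _ (fun i j hij => Subtype.ext (e.injective hij))
  have heig : ∀ i, Matrix.toEuclideanLin H (v i) = μ i.1 • v i := fun i => by
    rw [hv]; simp only; rw [toEuclideanLin_eigen hH (e i.1), ← he i.1]
  set U := Submodule.span ℝ (Set.range v) with hU
  have hUdim : Module.finrank ℝ U = n - r.1 := by
    rw [hU, finrank_span_eq_card hvon.linearIndependent,
      card_subtype_ge n r.1 (le_of_lt r.2)]
  have hrn := r.2
  obtain ⟨x, hxV, hxU, hx0⟩ := exists_ne_zero_mem_inf V U (by omega)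
  obtain ⟨a, hinner, hnorm⟩ := span_repr H v hvon (fun i => μ i.1) heig x hxU
  have h1 : ⟪x, Matrix.toEuclideanLin H x⟫ ≤ μ r * ‖x‖ ^ 2 := by
    rw [hinner, hnorm, Finset.mul_sum]
    refine Finset.sum_le_sum fun i _ => ?_
    exact mul_le_mul_of_nonneg_right (hμanti (by exact i.2)) (sq_nonneg _)
  have hx2 : 0 < ‖x‖ ^ 2 := by have := norm_pos_iff.mpr hx0; positivity
  nlinarith [hq x hxV]

lemma cf_upper {n : ℕ} {H : Matrix (Fin n) (Fin n) ℝ} (hH : H.IsHermitian)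
    (μ : Fin n → ℝ) (hμanti : Antitone μ) (e : Equiv.Perm (Fin n))
    (he : ∀ i, μ i = hH.eigenvalues (e i)) (r : Fin n) (c : ℝ)
    (U : Submodule ℝ (EuclideanSpace ℝ (Fin n)))
    (hdim : n - r.1 ≤ Module.finrank ℝ U)
    (hq : ∀ x ∈ U, ⟪x, Matrix.toEuclideanLin H x⟫ ≤ c * ‖x‖ ^ 2) :
    μ r ≤ c := by
  classical
  set v : {i : Fin n // i.1 ≤ r.1} → EuclideanSpace ℝ (Fin n) :=
    fun i => hH.eigenvectorBasis (e i.1) with hv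
  have hvon : Orthonormal ℝ v :=
    hH.eigenvectorBasis.orthonormal.comp _ (fun i j hij => Subtype.ext (e.injective hij))
  have heig : ∀ i, Matrix.toEuclideanLin H (v i) = μ i.1 • v i := fun i => by
    rw [hv]; simp only; rw [toEuclideanLin_eigen hH (e i.1), ← he i.1]
  set V := Submodule.span ℝ (Set.range v) with hV
  have hVdim : Module.finrank ℝ V = r.1 + 1 := by
    rw [hV, finrank_span_eq_card hvon.linearIndependent, card_subtype_le n r.1 r.2]
  have hrn := r.2
  obtain ⟨x, hxV, hxU, hx0⟩ := exists_ne_zero_mem_inf V U (by omega)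
  obtain ⟨a, hinner, hnorm⟩ := span_repr H v hvon (fun i => μ i.1) heig x hxV
  have h1 : μ r * ‖x‖ ^ 2 ≤ ⟪x, Matrix.toEuclideanLin H x⟫ := by
    rw [hinner, hnorm, Finset.mul_sum]
    refine Finset.sum_le_sum fun i _ => ?_
    exact mul_le_mul_of_nonneg_right (hμanti (by exact i.2)) (sq_nonneg _)
  have hx2 : 0 < ‖x‖ ^ 2 := by have := norm_pos_iff.mpr hx0; positivity
  nlinarith [hq x hxU]

lemma toCLM_transpose_eq_adjoint {m n : Type*} [Fintype m] [Fintype n]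
    [DecidableEq m] [DecidableEq n] (B : Matrix m n ℝ) :
    LinearMap.toContinuousLinearMap (Matrix.toEuclideanLin Bᵀ)
      = ContinuousLinearMap.adjoint
          (LinearMap.toContinuousLinearMap (Matrix.toEuclideanLin B)) := by
  rw [transpose_eq_conjTranspose, Matrix.toEuclideanLin_conjTranspose_eq_adjoint,
    LinearMap.adjoint_eq_toCLM_adjoint]
  ext x
  simp

lemma specNorm_transpose {m n : Type*} [Fintype m] [Fintype n]
    [DecidableEq m] [DecidableEq n] (B : Matrix m n ℝ) :
    specNorm Bᵀ = specNorm B := by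
  rw [specNorm, toCLM_transpose_eq_adjoint]
  exact ContinuousLinearMap.adjoint.norm_map _

lemma specNorm_transpose_mul_self {m n : Type*} [Fintype m] [Fintype n]
    [DecidableEq m] [DecidableEq n] (B : Matrix m n ℝ) :
    specNorm (Bᵀ * B) = specNorm B * specNorm B := by
  have hcomp : LinearMap.toContinuousLinearMap (Matrix.toEuclideanLin (Bᵀ * B))
      = (LinearMap.toContinuousLinearMap (Matrix.toEuclideanLin Bᵀ)).comp
        (LinearMap.toContinuousLinearMap (Matrix.toEuclideanLin B)) := by
    ext x
    simp [toEuclideanLin_mul_apply]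
  rw [specNorm, hcomp, toCLM_transpose_eq_adjoint]
  exact ContinuousLinearMap.norm_adjoint_comp_self _

lemma specNorm_add_le {m n : Type*} [Fintype m] [Fintype n] [DecidableEq n]
    (X Y : Matrix m n ℝ) : specNorm (X + Y) ≤ specNorm X + specNorm Y := by
  have : LinearMap.toContinuousLinearMap (Matrix.toEuclideanLin (X + Y))
      = LinearMap.toContinuousLinearMap (Matrix.toEuclideanLin X)
        + LinearMap.toContinuousLinearMap (Matrix.toEuclideanLin Y) := by
    ext x; simp [Matrix.toEuclideanLin_apply, Matrix.add_mulVec]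
  rw [specNorm, this]
  exact norm_add_le _ _

lemma specNorm_one_le {n : Type*} [Fintype n] [DecidableEq n] :
    specNorm (1 : Matrix n n ℝ) ≤ 1 := by
  have : LinearMap.toContinuousLinearMap (Matrix.toEuclideanLin (1 : Matrix n n ℝ))
      = ContinuousLinearMap.id ℝ _ := by
    ext x; simp [toEuclideanLin_one_apply]
  rw [specNorm, this]
  exact ContinuousLinearMap.norm_id_le

noncomputable def projMap (k : ℕ) (p : Fin k → Prop) [DecidablePred p] :
    EuclideanSpace ℝ (Fin k) →ₗ[ℝ] EuclideanSpace ℝ {i // p i} where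
  toFun := fun x => WithLp.toLp 2 (fun i => x i.1)
  map_add' := fun x y => by ext i; rfl
  map_smul' := fun c x => by ext i; rfl

lemma finrank_ker_ge {k : ℕ} {s : Type*} [Fintype s] (f : EuclideanSpace ℝ (Fin k) →ₗ[ℝ] EuclideanSpace ℝ s)
    (m : ℕ) (hm : Fintype.card s ≤ m) : k - m ≤ Module.finrank ℝ (LinearMap.ker f) := by
  have h1 := LinearMap.finrank_range_add_finrank_ker f
  have h2 : Module.finrank ℝ (LinearMap.range f) ≤ Fintype.card s := by
    have := Submodule.finrank_le (LinearMap.range f)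
    simpa [finrank_euclideanSpace] using this
  simp only [finrank_euclideanSpace, Fintype.card_fin] at h1
  omega

set_option maxHeartbeats 1000000 in
theorem stmt0 (dS dSc R : ℕ) (hRS : R ≤ dS) (hRSc : R ≤ dSc)
    (A : Matrix (Fin dS) (Fin R) ℝ) (B : Matrix (Fin dSc) (Fin R) ℝ)
    (hA : ∀ r, ∑ i, (A i r) ^ 2 = 1) (hB : ∀ r, ∑ i, (B i r) ^ 2 = 1)
    (w : Fin R → ℝ) (hw : ∀ r, 0 < w r) (hmono : Antitone w)
    (δ : ℝ)
    (hδ : δ = max (specNorm (Aᵀ * A - 1)) (specNorm (Bᵀ * B - 1)))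
    (Mmat : Matrix (Fin dS) (Fin dSc) ℝ) (hM : Mmat = A * Matrix.diagonal w * Bᵀ)
    (hH : (Mmatᵀ * Mmat).IsHermitian)
    (μ : Fin dSc → ℝ) (hμanti : Antitone μ)
    (hμ : ∃ e : Equiv.Perm (Fin dSc), ∀ i, μ i = hH.eigenvalues (e i)) :
    ∀ r : Fin R,
      |Real.sqrt (μ (Fin.castLE hRSc r)) - w r|
        ≤ Real.sqrt 2 * δ * w ⟨0, Nat.lt_of_le_of_lt (Nat.zero_le r.1) r.2⟩ := by
  classical
  intro r
  obtain ⟨e, he⟩ := hμ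
  set r' : Fin dSc := Fin.castLE hRSc r with hr'
  set w0 : ℝ := w ⟨0, Nat.lt_of_le_of_lt (Nat.zero_le r.1) r.2⟩ with hw0def
  have hδA : specNorm (Aᵀ * A - 1) ≤ δ := hδ ▸ le_max_left _ _
  have hδB : specNorm (Bᵀ * B - 1) ≤ δ := hδ ▸ le_max_right _ _
  have hδ0 : 0 ≤ δ := le_trans (specNorm_nonneg _) hδA
  have hw0pos : 0 < w0 := hw _
  have hwrpos : 0 < w r := hw r
  have hwrw0 : w r ≤ w0 := hmono (by simp [Fin.le_def])
  -- pointwise bounds for A and B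
  have hAbd : ∀ y : EuclideanSpace ℝ (Fin R),
      (1 - δ) * ‖y‖ ^ 2 ≤ ‖Matrix.toEuclideanLin A y‖ ^ 2
      ∧ ‖Matrix.toEuclideanLin A y‖ ^ 2 ≤ (1 + δ) * ‖y‖ ^ 2 := by
    intro y
    have h := norm_sq_apply_sub_norm_sq A y
    have h2 : specNorm (Aᵀ * A - 1) * ‖y‖ ^ 2 ≤ δ * ‖y‖ ^ 2 :=
      mul_le_mul_of_nonneg_right hδA (sq_nonneg _)
    rw [abs_le] at h
    constructor <;> nlinarith
  have hBbd : ∀ y : EuclideanSpace ℝ (Fin R),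
      (1 - δ) * ‖y‖ ^ 2 ≤ ‖Matrix.toEuclideanLin B y‖ ^ 2
      ∧ ‖Matrix.toEuclideanLin B y‖ ^ 2 ≤ (1 + δ) * ‖y‖ ^ 2 := by
    intro y
    have h := norm_sq_apply_sub_norm_sq B y
    have h2 : specNorm (Bᵀ * B - 1) * ‖y‖ ^ 2 ≤ δ * ‖y‖ ^ 2 :=
      mul_le_mul_of_nonneg_right hδB (sq_nonneg _)
    rw [abs_le] at h
    constructor <;> nlinarith
  -- the quadratic form of MᵀM
  have hq : ∀ x : EuclideanSpace ℝ (Fin dSc),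
      ⟪x, Matrix.toEuclideanLin (Mmatᵀ * Mmat) x⟫
        = ‖Matrix.toEuclideanLin A (Matrix.toEuclideanLin (Matrix.diagonal w)
            (Matrix.toEuclideanLin Bᵀ x))‖ ^ 2 := by
    intro x
    rw [inner_tmul_self, hM, toEuclideanLin_mul_apply, toEuclideanLin_mul_apply]
  have hWz : ∀ z : EuclideanSpace ℝ (Fin R),
      ‖Matrix.toEuclideanLin (Matrix.diagonal w) z‖ ^ 2 = ∑ i, (w i * z i) ^ 2 := by
    intro z
    rw [norm_sq_eq_sum]
    refine Finset.sum_congr rfl fun i _ => ?_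
    congr 1
    simp [Matrix.toEuclideanLin_apply, Matrix.mulVec_diagonal]
  -- upper bound : sqrt (μ r') ≤ (1 + δ) * w r
  have hBtop : ∀ x : EuclideanSpace ℝ (Fin dSc),
      ‖Matrix.toEuclideanLin Bᵀ x‖ ^ 2 ≤ (1 + δ) * ‖x‖ ^ 2 := by
    intro x
    have h1 : ‖Matrix.toEuclideanLin Bᵀ x‖ ≤ specNorm B * ‖x‖ := by
      have := le_specNorm Bᵀ x
      rwa [specNorm_transpose] at this
    have h2 : specNorm B * specNorm B ≤ 1 + δ := by
      rw [← specNorm_transpose_mul_self]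
      calc specNorm (Bᵀ * B) = specNorm ((Bᵀ * B - 1) + 1) := by rw [sub_add_cancel]
        _ ≤ specNorm (Bᵀ * B - 1) + specNorm (1 : Matrix (Fin R) (Fin R) ℝ) :=
            specNorm_add_le _ _
        _ ≤ δ + 1 := add_le_add hδB specNorm_one_le
        _ = 1 + δ := by ring
    nlinarith [norm_nonneg (Matrix.toEuclideanLin Bᵀ x), norm_nonneg x,
      specNorm_nonneg B]
  have hupper : Real.sqrt (μ r') ≤ (1 + δ) * w r := by
    set g : EuclideanSpace ℝ (Fin dSc) →ₗ[ℝ] EuclideanSpace ℝ {i : Fin R // i.1 < r.1} :=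
      (projMap R (fun i : Fin R => i.1 < r.1)).comp (Matrix.toEuclideanLin Bᵀ) with hg
    have hcard : Fintype.card {i : Fin R // i.1 < r.1} ≤ r.1 := by
      refine le_trans (Fintype.card_le_of_injective
        (fun (i : {i : Fin R // i.1 < r.1}) => (⟨i.1.1, i.2⟩ : Fin r.1)) ?_)
        (le_of_eq (Fintype.card_fin _))
      rintro ⟨⟨i, hi⟩, hi2⟩ ⟨⟨j, hj⟩, hj2⟩ h
      have := congrArg Fin.val h
      simp at this ⊢
      omega
    have hdim : dSc - r'.1 ≤ Module.finrank ℝ (LinearMap.ker g) := by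
      have := finrank_ker_ge g r.1 hcard
      simp only [hr', Fin.coe_castLE]
      exact this
    have key : ∀ x ∈ LinearMap.ker g,
        ⟪x, Matrix.toEuclideanLin (Mmatᵀ * Mmat) x⟫ ≤ ((1 + δ) * w r) ^ 2 * ‖x‖ ^ 2 := by
      intro x hx
      set z := Matrix.toEuclideanLin Bᵀ x with hz
      have hz0 : ∀ i : Fin R, i.1 < r.1 → z i = 0 := by
        intro i hi
        have := congrArg (fun v => v ⟨i, hi⟩) (LinearMap.mem_ker.mp hx)
        simpa [hg, projMap, hz, Matrix.toEuclideanLin_apply] using this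
      have h1 : ‖Matrix.toEuclideanLin (Matrix.diagonal w) z‖ ^ 2 ≤ (w r) ^ 2 * ‖z‖ ^ 2 := by
        rw [hWz, norm_sq_eq_sum, Finset.mul_sum]
        refine Finset.sum_le_sum fun i _ => ?_
        by_cases hi : i.1 < r.1
        · rw [hz0 i hi]; simp
        · push_neg at hi
          have hle : w i ≤ w r := hmono (by exact hi)
          have h4 : w i ^ 2 ≤ w r ^ 2 := by nlinarith [hw i]
          calc (w i * z i) ^ 2 = w i ^ 2 * z i ^ 2 := by ring
            _ ≤ w r ^ 2 * z i ^ 2 := mul_le_mul_of_nonneg_right h4 (sq_nonneg _)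
      have h2 : ‖z‖ ^ 2 ≤ (1 + δ) * ‖x‖ ^ 2 := hBtop x
      have h3 := (hAbd (Matrix.toEuclideanLin (Matrix.diagonal w) z)).2
      rw [hq x]
      calc ‖Matrix.toEuclideanLin A (Matrix.toEuclideanLin (Matrix.diagonal w) z)‖ ^ 2
          ≤ (1 + δ) * ‖Matrix.toEuclideanLin (Matrix.diagonal w) z‖ ^ 2 := h3
        _ ≤ (1 + δ) * ((w r) ^ 2 * ‖z‖ ^ 2) := mul_le_mul_of_nonneg_left h1 (by linarith)
        _ ≤ (1 + δ) * ((w r) ^ 2 * ((1 + δ) * ‖x‖ ^ 2)) :=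
            mul_le_mul_of_nonneg_left
              (mul_le_mul_of_nonneg_left h2 (sq_nonneg (w r))) (by linarith)
        _ = ((1 + δ) * w r) ^ 2 * ‖x‖ ^ 2 := by ring
    have hmu := cf_upper hH μ hμanti e he r' (((1 + δ) * w r) ^ 2) (LinearMap.ker g) hdim key
    calc Real.sqrt (μ r') ≤ Real.sqrt (((1 + δ) * w r) ^ 2) := Real.sqrt_le_sqrt hmu
      _ = (1 + δ) * w r := Real.sqrt_sq (by positivity)
  have hlower : (1 - δ) * w r ≤ Real.sqrt (μ r') := by
    rcases le_or_gt 1 δ with hδ1 | hδ1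
    · have h0 : (1 - δ) * w r ≤ 0 := mul_nonpos_of_nonpos_of_nonneg (by linarith) (le_of_lt hwrpos)
      exact le_trans h0 (Real.sqrt_nonneg _)
    · have h1δ : 0 < 1 - δ := by linarith
      set P := Bᵀ * B with hP
      have hPq : ∀ y : EuclideanSpace ℝ (Fin R),
          (1 - δ) * ‖y‖ ^ 2 ≤ ⟪y, Matrix.toEuclideanLin P y⟫ := by
        intro y
        rw [hP, inner_tmul_self]
        exact (hBbd y).1
      have hPinj : Function.Injective (Matrix.toEuclideanLin P) := by
        rw [← LinearMap.ker_eq_bot, LinearMap.ker_eq_bot']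
        intro m hm
        have h := hPq m
        rw [hm, inner_zero_right] at h
        have h2 : ‖m‖ ^ 2 = 0 := le_antisymm (by nlinarith [sq_nonneg ‖m‖]) (sq_nonneg _)
        exact norm_eq_zero.mp (pow_eq_zero_iff two_ne_zero |>.mp h2)
      have hPsurj := LinearMap.injective_iff_surjective.mp hPinj
      set Peq := LinearEquiv.ofBijective (Matrix.toEuclideanLin P) ⟨hPinj, hPsurj⟩ with hPeq
      have hBinj : Function.Injective (Matrix.toEuclideanLin B) := by
        rw [← LinearMap.ker_eq_bot, LinearMap.ker_eq_bot']
        intro m hm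
        have h := (hBbd m).1
        rw [hm] at h
        simp only [norm_zero] at h
        have h2 : ‖m‖ ^ 2 = 0 := le_antisymm (by nlinarith [sq_nonneg ‖m‖]) (sq_nonneg _)
        exact norm_eq_zero.mp (pow_eq_zero_iff two_ne_zero |>.mp h2)
      set f : EuclideanSpace ℝ (Fin R) →ₗ[ℝ] EuclideanSpace ℝ (Fin dSc) :=
        (Matrix.toEuclideanLin B).comp Peq.symm.toLinearMap with hf
      have hfinj : Function.Injective f := by
        rw [hf, LinearMap.coe_comp]
        exact hBinj.comp Peq.symm.injective
      set S := LinearMap.ker (projMap R (fun i : Fin R => r.1 < i.1)) with hS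
      have hScard : Fintype.card {i : Fin R // r.1 < i.1} ≤ R - r.1 - 1 := by
        refine le_trans (Fintype.card_le_of_injective
          (fun (i : {i : Fin R // r.1 < i.1}) =>
            (⟨i.1.1 - r.1 - 1, by have := i.1.2; have := i.2; omega⟩ : Fin (R - r.1 - 1))) ?_)
          (le_of_eq (Fintype.card_fin _))
        rintro ⟨⟨i, hi⟩, hi2⟩ ⟨⟨j, hj⟩, hj2⟩ h
        have := congrArg Fin.val h
        simp at this hi2 hj2 ⊢
        omega
      have hSdim : r.1 + 1 ≤ Module.finrank ℝ S := by
        rw [hS]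
        have := finrank_ker_ge (projMap R (fun i : Fin R => r.1 < i.1)) (R - r.1 - 1) hScard
        have hrR := r.2
        omega
      set V := S.map f with hV
      have hVdim : r'.1 + 1 ≤ Module.finrank ℝ V := by
        have heq : Module.finrank ℝ V = Module.finrank ℝ S :=
          ((Submodule.equivMapOfInjective f hfinj S).finrank_eq).symm
        simp only [hr', Fin.coe_castLE]
        omega
      have key : ∀ x ∈ V, ((1 - δ) * w r) ^ 2 * ‖x‖ ^ 2
          ≤ ⟪x, Matrix.toEuclideanLin (Mmatᵀ * Mmat) x⟫ := by
        rintro x hx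
        obtain ⟨c', hc'S, rfl⟩ := Submodule.mem_map.mp hx
        set y : EuclideanSpace ℝ (Fin R) := Peq.symm c' with hy
        have hPy : Matrix.toEuclideanLin P y = c' := Peq.apply_symm_apply c'
        have hfc : f c' = Matrix.toEuclideanLin B y := rfl
        have hzc : Matrix.toEuclideanLin Bᵀ (f c') = c' := by
          rw [hfc, ← toEuclideanLin_mul_apply, ← hP, hPy]
        have hc0 : ∀ i : Fin R, r.1 < i.1 → c' i = 0 := by
          intro i hi
          have := congrArg (fun v => v ⟨i, hi⟩) (LinearMap.mem_ker.mp hc'S)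
          simpa [projMap] using this
        have hWc : (w r) ^ 2 * ‖c'‖ ^ 2 ≤ ‖Matrix.toEuclideanLin (Matrix.diagonal w) c'‖ ^ 2 := by
          rw [hWz, norm_sq_eq_sum, Finset.mul_sum]
          refine Finset.sum_le_sum fun i _ => ?_
          by_cases hi : r.1 < i.1
          · rw [hc0 i hi]; simp
          · push_neg at hi
            have hle : w r ≤ w i := hmono (by exact hi)
            have h4 : (w r) ^ 2 ≤ (w i) ^ 2 := by nlinarith [hw r]
            calc (w r) ^ 2 * c' i ^ 2 ≤ (w i) ^ 2 * c' i ^ 2 :=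
                  mul_le_mul_of_nonneg_right h4 (sq_nonneg _)
              _ = (w i * c' i) ^ 2 := by ring
        have hx1 : ‖f c'‖ ^ 2 = ⟪y, c'⟫ := by
          rw [hfc, ← inner_tmul_self, ← hP, hPy]
        have hyineq : (1 - δ) * ‖y‖ ^ 2 ≤ ‖f c'‖ ^ 2 := by
          rw [hx1, ← hPy]
          exact hPq y
        have hinner_le : ⟪y, c'⟫ ≤ ‖y‖ * ‖c'‖ := real_inner_le_norm y c'
        have hnormc : (1 - δ) * ‖f c'‖ ^ 2 ≤ ‖c'‖ ^ 2 := by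
          rcases eq_or_lt_of_le (norm_nonneg (f c')) with h0 | h0
          · rw [← h0]
            nlinarith [sq_nonneg ‖c'‖]
          · have ha2 : ‖f c'‖ ^ 2 ≤ ‖y‖ * ‖c'‖ := by rw [hx1]; exact hinner_le
            have h4 : ‖f c'‖ ^ 2 * ‖f c'‖ ^ 2 ≤ (‖y‖ * ‖c'‖) * (‖y‖ * ‖c'‖) :=
              mul_le_mul ha2 ha2 (sq_nonneg _) (mul_nonneg (norm_nonneg _) (norm_nonneg _))
            have h6 : ((1 - δ) * ‖y‖ ^ 2) * ‖c'‖ ^ 2 ≤ ‖f c'‖ ^ 2 * ‖c'‖ ^ 2 :=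
              mul_le_mul_of_nonneg_right hyineq (sq_nonneg _)
            nlinarith [h4, h6, mul_pos h0 h0]
        have hAW := (hAbd (Matrix.toEuclideanLin (Matrix.diagonal w) c')).1
        rw [hq (f c'), hzc]
        calc ((1 - δ) * w r) ^ 2 * ‖f c'‖ ^ 2
            = ((1 - δ) * (w r) ^ 2) * ((1 - δ) * ‖f c'‖ ^ 2) := by ring
          _ ≤ ((1 - δ) * (w r) ^ 2) * ‖c'‖ ^ 2 :=
              mul_le_mul_of_nonneg_left hnormc
                (mul_nonneg (le_of_lt h1δ) (sq_nonneg _))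
          _ = (1 - δ) * ((w r) ^ 2 * ‖c'‖ ^ 2) := by ring
          _ ≤ (1 - δ) * ‖Matrix.toEuclideanLin (Matrix.diagonal w) c'‖ ^ 2 :=
              mul_le_mul_of_nonneg_left hWc (le_of_lt h1δ)
          _ ≤ ‖Matrix.toEuclideanLin A (Matrix.toEuclideanLin (Matrix.diagonal w) c')‖ ^ 2 := hAW
      have hmu := cf_lower hH μ hμanti e he r' (((1 - δ) * w r) ^ 2) V hVdim key
      calc (1 - δ) * w r = Real.sqrt (((1 - δ) * w r) ^ 2) :=
            (Real.sqrt_sq (by positivity)).symm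
        _ ≤ Real.sqrt (μ r') := Real.sqrt_le_sqrt hmu
  -- combine
  have hs2 : (1 : ℝ) ≤ Real.sqrt 2 := by
    rw [show (1:ℝ) = Real.sqrt 1 from (Real.sqrt_one).symm]
    exact Real.sqrt_le_sqrt one_le_two
  have hsqrtnn : 0 ≤ Real.sqrt (μ r') := Real.sqrt_nonneg _
  have hc1 : δ * w r ≤ δ * w0 := mul_le_mul_of_nonneg_left hwrw0 hδ0
  have hc2 : δ * w0 ≤ Real.sqrt 2 * δ * w0 := by nlinarith
  rw [abs_le]
  constructor <;> nlinarith
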